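/- Let a_0, ..., a_n ∈ ℤ_p^× and b_0, ..., b_n ∈ ℚ_p with b_1, ..., b_n ∈ pℤ_p. Then for all x, y ∈ pℤ_p, the p-adic distance between the finite continued fractions b_0/(a_0 + b_1/(a_1 + ... + b_n/(a_n + x))) and b_0/(a_0 + b_1/(a_1 + ... + b_n/(a_n + y))) equals |x - y|_p · ∏_{i=0}^n |b_i|_p, which is at most p^{-n}|b_0|_p. -/
import Mathlib


open scoped Classical in
noncomputable def eps {p : ℕ} [Fact p.Prime] (x : ℚ_[p]) : ℚ_[p] :=
  if x = 0 then 1 else (p : ℚ_[p]) ^ (-x.valuation) * x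

noncomputable def fdigit {p : ℕ} [Fact p.Prime] (x : ℚ_[p]) : ℕ :=
  if h : ‖x‖ ≤ 1 then ((PadicInt.toZMod (⟨x, h⟩ : ℤ_[p])).val) else 0

noncomputable def tau {p : ℕ} [Fact p.Prime] (x : ℚ_[p]) : ℚ_[p] :=
  1 / eps x - (fdigit (1 / eps x) : ℚ_[p])

noncomputable def sigma {p : ℕ} [Fact p.Prime] (x : ℚ_[p]) : ℚ_[p] :=
  eps x - (fdigit (eps x) : ℚ_[p])

/-- `f(x) = Σ_{n=0}^∞ ⌊1/ε(τⁿ x)⌋_p ∏_{m=0}^n τᵐ x / ε(τᵐ x)` -/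
noncomputable def schneiderF {p : ℕ} [Fact p.Prime] (x : ℚ_[p]) : ℚ_[p] :=
  ∑' n : ℕ, (fdigit (1 / eps (tau^[n] x)) : ℚ_[p]) *
    ∏ m ∈ Finset.range (n + 1), (tau^[m] x) / eps (tau^[m] x)

/-- Finite continued fraction `b 0 / (a 0 + b 1 / (a 1 + ⋯ + b n / (a n + x)))`. -/
noncomputable def cf {p : ℕ} [Fact p.Prime] : (ℕ → ℚ_[p]) → (ℕ → ℚ_[p]) → ℕ → ℚ_[p] → ℚ_[p]
  | a, b, 0, x => b 0 / (a 0 + x)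
  | a, b, n + 1, x => b 0 / (a 0 + cf (fun i => a (i + 1)) (fun i => b (i + 1)) n x)

section Aux
variable {p : ℕ} [Fact p.Prime]

lemma norm_unit_add {a x : ℚ_[p]} (ha : ‖a‖ = 1) (hx : ‖x‖ < 1) : ‖a + x‖ = 1 := by
  have hne : ‖a‖ ≠ ‖x‖ := by rw [ha]; exact (ne_of_lt hx).symm
  rw [Padic.add_eq_max_of_ne hne, ha]
  exact max_eq_left (le_of_lt (ha ▸ hx))

lemma dist_div_aux {a bb x y : ℚ_[p]} (ha : ‖a‖ = 1) (hx : ‖x‖ < 1) (hy : ‖y‖ < 1) :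
    ‖bb / (a + x) - bb / (a + y)‖ = ‖x - y‖ * ‖bb‖ := by
  have h1 : ‖a + x‖ = 1 := norm_unit_add ha hx
  have h2 : ‖a + y‖ = 1 := norm_unit_add ha hy
  have n1 : a + x ≠ 0 := by intro h; rw [h] at h1; simp at h1
  have n2 : a + y ≠ 0 := by intro h; rw [h] at h2; simp at h2
  have key : bb / (a + x) - bb / (a + y) = bb * (y - x) / ((a + x) * (a + y)) := by
    field_simp; ring
  rw [key, norm_div, norm_mul, norm_mul, h1, h2]
  rw [show ‖y - x‖ = ‖x - y‖ from by rw [← norm_neg]; ring_nf]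
  ring

lemma cf_norm_le : ∀ (n : ℕ) (a b : ℕ → ℚ_[p]) (x : ℚ_[p]),
    (∀ i ≤ n, ‖a i‖ = 1) → (∀ i, 1 ≤ i → i ≤ n → ‖b i‖ < 1) → ‖x‖ < 1 →
    ‖cf a b n x‖ ≤ ‖b 0‖
  | 0, a, b, x, ha, hb, hx => by
      rw [cf, norm_div, norm_unit_add (ha 0 le_rfl) hx, div_one]
  | n + 1, a, b, x, ha, hb, hx => by
      rw [cf]
      have htail : ‖cf (fun i => a (i + 1)) (fun i => b (i + 1)) n x‖ < 1 := by
        refine lt_of_le_of_lt (cf_norm_le n _ _ x (fun i hi => ha (i+1) (by omega))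
          (fun i h1 h2 => hb (i+1) (by omega) (by omega)) hx) ?_
        exact hb 1 le_rfl (by omega)
      rw [norm_div, norm_unit_add (ha 0 (by omega)) htail, div_one]

end Aux

theorem dist_cf (p : ℕ) [Fact p.Prime] (n : ℕ) (a b : ℕ → ℚ_[p])
    (ha : ∀ i ≤ n, ‖a i‖ = 1) (hb : ∀ i, 1 ≤ i → i ≤ n → ‖b i‖ < 1)
    (x y : ℚ_[p]) (hx : ‖x‖ < 1) (hy : ‖y‖ < 1) :
    ‖cf a b n x - cf a b n y‖ = ‖x - y‖ * ∏ i ∈ Finset.range (n + 1), ‖b i‖ ∧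
    ‖x - y‖ * ∏ i ∈ Finset.range (n + 1), ‖b i‖ ≤ (p : ℝ) ^ (-(n : ℤ)) * ‖b 0‖ := by
  constructor
  · induction n generalizing a b with
    | zero =>
        simp only [cf]
        rw [dist_div_aux (ha 0 le_rfl) hx hy, Finset.prod_range_one]
    | succ n ih =>
        have ha' : ∀ i ≤ n, ‖(fun i => a (i + 1)) i‖ = 1 := fun i hi => ha (i+1) (by omega)
        have hb' : ∀ i, 1 ≤ i → i ≤ n → ‖(fun i => b (i + 1)) i‖ < 1 :=
          fun i h1 h2 => hb (i+1) (by omega) (by omega)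
        have hcx : ‖cf (fun i => a (i + 1)) (fun i => b (i + 1)) n x‖ < 1 :=
          lt_of_le_of_lt (cf_norm_le n _ _ x ha' hb' hx) (hb 1 le_rfl (by omega))
        have hcy : ‖cf (fun i => a (i + 1)) (fun i => b (i + 1)) n y‖ < 1 :=
          lt_of_le_of_lt (cf_norm_le n _ _ y ha' hb' hy) (hb 1 le_rfl (by omega))
        simp only [cf]
        rw [dist_div_aux (ha 0 (by omega)) hcx hcy, ih _ _ ha' hb',
          Finset.prod_range_succ' (fun i => ‖b i‖) (n + 1)]
        ring
  · have hxy : ‖x - y‖ ≤ 1 := by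
      have h := Padic.nonarchimedean (x : ℚ_[p]) (-y)
      rw [← sub_eq_add_neg] at h
      refine le_trans (by exact_mod_cast h) ?_
      rw [norm_neg]
      exact max_le hx.le hy.le
    have hstep : ∏ i ∈ Finset.range n, ‖b (i + 1)‖ ≤ (p : ℝ) ^ (-(n : ℤ)) := by
      have h1 : ∏ i ∈ Finset.range n, ‖b (i + 1)‖
          ≤ ∏ _i ∈ Finset.range n, ((p : ℝ) ^ (-1 : ℤ)) := by
        refine Finset.prod_le_prod (fun i _ => norm_nonneg _) (fun i hi => ?_)
        rw [Padic.norm_le_pow_iff_norm_lt_pow_add_one]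
        simpa using hb (i + 1) (by omega) (by simp at hi; omega)
      refine le_trans h1 (le_of_eq ?_)
      rw [Finset.prod_const, Finset.card_range, ← zpow_natCast (((p : ℝ) ^ (-1 : ℤ))) n,
        ← zpow_mul]
      ring_nf
    have hprod : ∏ i ∈ Finset.range (n + 1), ‖b i‖ ≤ (p : ℝ) ^ (-(n : ℤ)) * ‖b 0‖ := by
      rw [Finset.prod_range_succ' (fun i => ‖b i‖) n]
      exact mul_le_mul_of_nonneg_right hstep (norm_nonneg _)
    have hfin : ‖x - y‖ * ∏ i ∈ Finset.range (n + 1), ‖b i‖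
        ≤ 1 * ((p : ℝ) ^ (-(n : ℤ)) * ‖b 0‖) :=
      mul_le_mul hxy hprod (Finset.prod_nonneg fun i _ => norm_nonneg _) zero_le_one
    simpa using hfin
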